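/- Let $u:(x_*, 0)\to(0,\infty)$ satisfy $\frac{u''}{1+u'^2} = -\frac{2}{u} - \frac{2u'}{u^2}$ with $u' > 0$ and $u'' < 0$ on $(x_*,0)$, where $x_* < 0$ is finite. Then it is impossible that $u(x) \to 0$ as $x \to x_*^+$. Equivalently, a strictly increasing concave graph solution cannot emanate from height zero at a finite point. -/

import Mathlib

open Set Filter

/-- A strictly increasing, strictly concave positive solution of
`u''/(1+u'^2) = -2/u - 2u'/u²` on `(x_*, 0)` with `x_*` finite cannot emanate from height zero
at `x_*`. -/
theorem stmt11 (xstar : ℝ) (hx : xstar < 0) (u : ℝ → ℝ)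
    (hpos : ∀ x ∈ Ioo xstar 0, 0 < u x)
    (hdiff : ∀ x ∈ Ioo xstar 0, DifferentiableAt ℝ u x)
    (hdiff' : ∀ x ∈ Ioo xstar 0, DifferentiableAt ℝ (deriv u) x)
    (hode : ∀ x ∈ Ioo xstar 0,
      deriv (deriv u) x / (1 + (deriv u x) ^ 2) = -2 / u x - 2 * deriv u x / (u x) ^ 2)
    (hinc : ∀ x ∈ Ioo xstar 0, 0 < deriv u x)
    (hconc : ∀ x ∈ Ioo xstar 0, deriv (deriv u) x < 0)
    (hlim : Tendsto u (nhdsWithin xstar (Ioi xstar)) (nhds 0)) :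
    False := by
  set F : ℝ → ℝ := fun x => Real.arctan (deriv u x) - 2 / u x with hF
  -- derivative of F
  have hFderiv : ∀ x ∈ Ioo xstar 0, HasDerivAt F (-2 / u x) x := by
    intro x hxm
    have hu0 : u x ≠ 0 := (hpos x hxm).ne'
    have h1 : HasDerivAt (deriv u) (deriv (deriv u) x) x := (hdiff' x hxm).hasDerivAt
    have h2 : HasDerivAt (fun y => Real.arctan (deriv u y))
        (1 / (1 + deriv u x ^ 2) * deriv (deriv u) x) x := h1.arctan
    have h3 : HasDerivAt (fun y => 2 / u y)
        ((0 * u x - 2 * deriv u x) / u x ^ 2) x :=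
      (hasDerivAt_const x (2:ℝ)).div (hdiff x hxm).hasDerivAt hu0
    have h4 := h2.sub h3
    refine h4.congr_deriv ?_
    have hode' := hode x hxm
    have hne : (1 : ℝ) + deriv u x ^ 2 ≠ 0 := by positivity
    have : (1 : ℝ) / (1 + deriv u x ^ 2) * deriv (deriv u) x
        = deriv (deriv u) x / (1 + deriv u x ^ 2) := by ring
    rw [this, hode']
    field_simp
    ring
  -- F is strictly decreasing on Ioo xstar 0
  have hanti : StrictAntiOn F (Ioo xstar 0) := by
    apply strictAntiOn_of_deriv_neg (convex_Ioo _ _)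
    · intro x hxm
      exact ((hFderiv x hxm).differentiableAt).continuousAt.continuousWithinAt
    · intro x hxm
      rw [interior_Ioo] at hxm
      rw [(hFderiv x hxm).deriv]
      have := hpos x hxm
      have h2 : (0:ℝ) < 2 / u x := by positivity
      have h3 : -2 / u x = -(2 / u x) := by ring
      linarith
  -- pick a reference point a = xstar/2
  set a : ℝ := xstar / 2 with ha
  have haI : a ∈ Ioo xstar 0 := by constructor <;> [linarith; linarith]
  have hFa_lt : F a < Real.pi / 2 := by
    have h1 : Real.arctan (deriv u a) < Real.pi / 2 := Real.arctan_lt_pi_div_two _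
    have h2 : (0:ℝ) < 2 / u a := by have := hpos a haI; positivity
    simp only [hF]
    linarith
  set C : ℝ := Real.pi / 2 - F a with hC
  have hCpos : 0 < C := by simp only [hC]; linarith
  -- near xstar, u x < 2 / C
  have hev1 : ∀ᶠ x in nhdsWithin xstar (Ioi xstar), u x < 2 / C :=
    hlim (gt_mem_nhds (by positivity))
  have hev2 : ∀ᶠ x in nhdsWithin xstar (Ioi xstar), x ∈ Ioo xstar a :=
    Ioo_mem_nhdsGT_of_mem (by constructor <;> [exact le_refl _; exact haI.1])
  obtain ⟨x, hx1, hx2⟩ := (hev1.and hev2).exists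
  have hxI : x ∈ Ioo xstar 0 := ⟨hx2.1, lt_trans hx2.2 haI.2⟩
  have hFx : F a < F x := hanti hxI haI hx2.2
  -- but F x < π/2 - 2/u x, so 2/u x < C, so u x > 2/C
  have h1 : Real.arctan (deriv u x) < Real.pi / 2 := Real.arctan_lt_pi_div_two _
  have h2 : 2 / u x < C := by
    simp only [hF] at hFx
    simp only [hC]
    linarith
  have hupos := hpos x hxI
  have h3 : 2 / C < u x := by
    rw [div_lt_iff₀ hCpos]
    rw [div_lt_iff₀ hupos] at h2
    linarith [mul_comm (u x) C]
  linarith
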